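/- (Soundness of the even-odd abstraction.) Let P be a symmetric rendez-vous protocol in which, for every q ∈ Q_P, the underlying graph has a path from q_i to q and a path from q to q_f. If (q_i^L, γ_i^E) ⇝* (q_f^L, γ_f^E), then there exists an even n ∈ ℕ such that C_i^(n) →* C_f^(n); and if (q_i^L, γ_i^O) ⇝* (q_f^L, γ_f^O), then there exists an odd n ∈ ℕ such that C_i^(n) →* C_f^(n). -/

import Mathlib

/-- Actions labelling edges of a rendez-vous protocol: request (`recv`, written `?a`)
or answer (`send`, written `!a`). -/
inductive RVAct (A : Type) : Type
  | send : A → RVAct A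
  | recv : A → RVAct A

/-- A rendez-vous protocol: a finite set of states `Q` partitioned (via `isLeader`)
into process states and leader states, a finite alphabet `A`, initial/final states for
processes and for the leader, and a set of edges staying within each part. -/
structure RVProtocol (Q A : Type) : Type where
  isLeader : Q → Bool
  qi : Q
  qf : Q
  qiL : Q
  qfL : Q
  hqi : isLeader qi = false
  hqf : isLeader qf = false
  hqiL : isLeader qiL = true
  hqfL : isLeader qfL = true
  E : Set (Q × RVAct A × Q)
  hE : ∀ e ∈ E, isLeader e.1 = isLeader e.2.2

namespace RVProtocol

variable {Q A : Type} [DecidableEq Q] (P : RVProtocol Q A)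

/-- A configuration is a multiset of states with exactly one occurrence of a leader state. -/
def IsConfig (C : Multiset Q) : Prop :=
  (C.filter (fun q => P.isLeader q = true)).card = 1

/-- One rendez-vous step between configurations. -/
def Step (C C' : Multiset Q) : Prop :=
  ∃ (a : A) (q1 q2 q1' q2' : Q),
    (q1, RVAct.recv a, q2) ∈ P.E ∧ (q1', RVAct.send a, q2') ∈ P.E ∧
    0 < C.count q1 ∧ 0 < C.count q1' ∧ 2 ≤ C.count q1 + C.count q1' ∧
    C' = C - {q1, q1'} + {q2, q2'}

/-- Reachability: reflexive-transitive closure of `Step`. -/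
def Reach : Multiset Q → Multiset Q → Prop := Relation.ReflTransGen P.Step

/-- The initial configuration with `n` processes. -/
def Ci (n : ℕ) : Multiset Q := Multiset.replicate n P.qi + {P.qiL}

/-- The final configuration with `n` processes. -/
def Cf (n : ℕ) : Multiset Q := Multiset.replicate n P.qf + {P.qfL}

/-! The Petri net `N_P` associated to a protocol `P`: one place per state of `Q`
(markings are functions `Q → ℕ`), a transition `t_i` producing a token in `p_{q_i}`,
a transition `t_f^L` consuming a token from `p_{q_f^L}`, and for every pair of edges
`(q1,!a,q1')`, `(q2,?a,q2')` a transition with precondition `p_{q1} + p_{q2}` and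
postcondition `p_{q1'} + p_{q2'}`.  We describe it by its firing relation. -/
def NPStep (M M' : Q → ℕ) : Prop :=
  -- transition `t_i`
  (M' = M + Pi.single P.qi 1) ∨
  -- transition `t_f^L`
  (Pi.single P.qfL 1 ≤ M ∧ M' = M - Pi.single P.qfL 1) ∨
  -- rendez-vous transitions
  (∃ (a : A) (q1 q2 q1' q2' : Q),
    (q1, RVAct.send a, q1') ∈ P.E ∧ (q2, RVAct.recv a, q2') ∈ P.E ∧
    Pi.single q1 1 + Pi.single q2 1 ≤ M ∧
    M' = M - (Pi.single q1 1 + Pi.single q2 1) + (Pi.single q1' 1 + Pi.single q2' 1))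

/-- Reachability in the Petri net `N_P`. -/
def NPReach : (Q → ℕ) → (Q → ℕ) → Prop := Relation.ReflTransGen P.NPStep

/-- The initial marking `M_0` of `N_P`: one token in `p_{q_i^L}`, none elsewhere. -/
def M0 : Q → ℕ := Pi.single P.qiL 1

/-- The marking `M_f^{(n)}`: `n` tokens in `p_{q_f}`, none elsewhere. -/
def Mf (n : ℕ) : Q → ℕ := Pi.single P.qf n

end RVProtocol


namespace RVProtocol

variable {Q A : Type} (P : RVProtocol Q A)

/-- A rendez-vous protocol is symmetric when `(q,!a,q') ∈ E` iff `(q,?a,q') ∈ E`;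
such an edge is then written `(q,a,q')`. -/
def IsSymmetric : Prop :=
  ∀ (q : Q) (a : A) (q' : Q), (q, RVAct.send a, q') ∈ P.E ↔ (q, RVAct.recv a, q') ∈ P.E

/-- The edge relation of the underlying graph of the protocol: there is an edge from
`q` to `q'` whenever `(q,a,q') ∈ E` for some letter `a`. -/
def Adj (q q' : Q) : Prop := ∃ a : A, (q, RVAct.send a, q') ∈ P.E

/-- Every process state is on a path from `q_i` to `q_f` in the underlying graph. -/
def Connected : Prop :=
  ∀ q : Q, P.isLeader q = false →
    Relation.ReflTransGen P.Adj P.qi q ∧ Relation.ReflTransGen P.Adj q P.qf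

end RVProtocol

/-- Flip the parity values (`false` = even `E`, `true` = odd `O`) of `γ` at `x1` and `x2`,
with no change at all if `x1 = x2`. -/
def flipTwo {X : Type} [DecidableEq X] (γ : X → Bool) (x1 x2 : X) : X → Bool :=
  if x1 = x2 then γ
  else fun x => if x = x1 ∨ x = x2 then !(γ x) else γ x

namespace RVProtocol

variable {Q A : Type} [DecidableEq Q] (P : RVProtocol Q A)

/-- The process states `Q_P` of the protocol. -/
abbrev ProcState : Type := {q : Q // P.isLeader q = false}

/-- The leader states `Q_L` of the protocol. -/
abbrev LeadState : Type := {q : Q // P.isLeader q = true}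

/-- Even-odd abstract configurations: a leader state together with a parity
(`false` = even `E`, `true` = odd `O`) for each process state. -/
abbrev AbsConf : Type := P.LeadState × (P.ProcState → Bool)

/-- One step of the even-odd abstraction: either the leader takes an edge together with
one process (case 1), or two processes perform a rendez-vous (case 2); the parities are
updated by flipping at the (distinct) endpoints of each edge used. -/
def EOStep (c1 c2 : P.AbsConf) : Prop :=
  (∃ (a : A) (q1 q2 : P.ProcState),
      ((c1.1 : Q), RVAct.send a, (c2.1 : Q)) ∈ P.E ∧
      ((q1 : Q), RVAct.send a, (q2 : Q)) ∈ P.E ∧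
      c2.2 = flipTwo c1.2 q1 q2) ∨
  (c1.1 = c2.1 ∧
    ∃ (a : A) (q1 q2 q3 q4 : P.ProcState),
      ((q1 : Q), RVAct.send a, (q2 : Q)) ∈ P.E ∧
      ((q3 : Q), RVAct.send a, (q4 : Q)) ∈ P.E ∧
      c2.2 = flipTwo (flipTwo c1.2 q1 q2) q3 q4)

/-- Reachability in the even-odd abstraction. -/
def EOReach : P.AbsConf → P.AbsConf → Prop := Relation.ReflTransGen P.EOStep

/-- The abstract configuration `(q_i^L, γ_i^E)`: all parities even. -/
def absIE : P.AbsConf := (⟨P.qiL, P.hqiL⟩, fun _ => false)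

/-- The abstract configuration `(q_f^L, γ_f^E)`: all parities even. -/
def absFE : P.AbsConf := (⟨P.qfL, P.hqfL⟩, fun _ => false)

/-- The abstract configuration `(q_i^L, γ_i^O)`: parity odd exactly at `q_i`. -/
def absIO : P.AbsConf := (⟨P.qiL, P.hqiL⟩, fun q => decide ((q : Q) = P.qi))

/-- The abstract configuration `(q_f^L, γ_f^O)`: parity odd exactly at `q_f`. -/
def absFO : P.AbsConf := (⟨P.qfL, P.hqfL⟩, fun q => decide ((q : Q) = P.qf))

/-- The concretization `[[(q^L, γ)]]` of an abstract configuration: configurations `C`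
with `C(q^L) = 1` and, for each process state `q`, `C(q)` even iff `γ(q) = E`. -/
def Interp (c : P.AbsConf) (C : Multiset Q) : Prop :=
  P.IsConfig C ∧ C.count (c.1 : Q) = 1 ∧
    ∀ q : P.ProcState, (Even (C.count (q : Q)) ↔ c.2 q = false)

end RVProtocol

namespace RVProtocol

variable {Q A : Type} [DecidableEq Q] (P : RVProtocol Q A)

/-- Auxiliary representation predicate: `C` has leader counts concentrated (with value 1)
at `c.1`, and process parities given by `c.2`. -/
def Rep (c : P.AbsConf) (C : Multiset Q) : Prop :=
  (∀ q : Q, P.isLeader q = true → C.count q = if q = (c.1 : Q) then 1 else 0) ∧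
  (∀ q : P.ProcState, Even (C.count (q : Q)) ↔ c.2 q = false)

lemma step_core {a : A} {s s' r r' : Q}
    (hs : (s, RVAct.send a, s') ∈ P.E) (hr : (r, RVAct.recv a, r') ∈ P.E)
    (D : Multiset Q) : P.Step (D + {r, s}) (D + {r', s'}) := by
  refine ⟨a, r, r', s, s', hr, hs, ?_, ?_, ?_, ?_⟩
  · by_cases h : r = s <;>
      simp [Multiset.insert_eq_cons, Multiset.count_cons, Multiset.count_singleton, h]
  · by_cases h : s = r <;>
      simp [Multiset.insert_eq_cons, Multiset.count_cons, Multiset.count_singleton, h]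
  · by_cases h : r = s <;>
      simp [Multiset.insert_eq_cons, Multiset.count_cons, Multiset.count_singleton, h] <;>
      omega
  · rw [add_tsub_cancel_right]

lemma pairReach (hsym : P.IsSymmetric) {q q' : Q} (h : Relation.ReflTransGen P.Adj q q') :
    ∀ D : Multiset Q, P.Reach (D + {q, q}) (D + {q', q'}) := by
  induction h using Relation.ReflTransGen.head_induction_on with
  | refl => intro D; exact Relation.ReflTransGen.refl
  | head hadj _ ih =>
      intro D
      obtain ⟨a, ha⟩ := hadj
      exact Relation.ReflTransGen.head (P.step_core ha ((hsym _ _ _).mp ha) D) (ih D)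

end RVProtocol


lemma flip_aux {X : Type} [DecidableEq X] {γ : X → Bool} {q1 q2 x : X} {n m : ℕ}
    (hm : m % 2 = (n + (if x = q1 then 1 else 0) + (if x = q2 then 1 else 0)) % 2)
    (hγ : Even n ↔ γ x = false) :
    (Even m ↔ flipTwo γ q1 q2 x = false) := by
  have hg2 : n % 2 = 0 ↔ γ x = false := by rw [← Nat.even_iff]; exact hγ
  rw [Nat.even_iff]
  by_cases h12 : q1 = q2
  · rw [flipTwo, if_pos h12]
    have hmn : m % 2 = n % 2 := by
      subst h12
      by_cases h1 : x = q1 <;> simp only [h1, if_true, if_false, if_pos, if_neg,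
        not_false_iff] at hm <;> omega
    rw [hmn]; exact hg2
  · rw [flipTwo, if_neg h12]
    show m % 2 = 0 ↔ (if x = q1 ∨ x = q2 then !γ x else γ x) = false
    by_cases h1 : x = q1
    · have h2 : ¬ x = q2 := fun h2 => h12 (h1 ▸ h2)
      rw [if_pos h1, if_neg h2] at hm
      rw [if_pos (Or.inl h1)]
      cases hγx : γ x <;> simp only [hγx, Bool.not_true, Bool.not_false] at hg2 ⊢ <;>
        simp_all <;> omega
    · by_cases h2 : x = q2
      · rw [if_neg h1, if_pos h2] at hm
        rw [if_pos (Or.inr h2)]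
        cases hγx : γ x <;> simp only [hγx, Bool.not_true, Bool.not_false] at hg2 ⊢ <;>
          simp_all <;> omega
      · rw [if_neg h1, if_neg h2] at hm
        rw [if_neg (by push_neg; exact ⟨h1, h2⟩)]
        have hmn : m % 2 = n % 2 := by omega
        rw [hmn]; exact hg2

namespace RVProtocol

variable {Q A : Type} [DecidableEq Q] (P : RVProtocol Q A)

lemma proc_ne_leader {q : Q} (hq : P.isLeader q = true) (p : P.ProcState) : q ≠ (p : Q) := by
  intro e; rw [e, p.2] at hq; exact absurd hq (by simp)

lemma sim (hsym : P.IsSymmetric) (hconn : P.Connected) {c c' : P.AbsConf}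
    (h : P.EOStep c c') (C : Multiset Q) (hC : P.Rep c C) :
    ∃ C', P.Rep c' C' ∧ C'.card = C.card + 4 ∧
      ∀ X, P.Reach (C + Multiset.replicate 4 P.qi + X) (C' + X) := by
  obtain ⟨hCL, hCγ⟩ := hC
  have hcount : C.count (c.1 : Q) = 1 := by simpa using hCL _ c.1.2
  have hmem : (c.1 : Q) ∈ C := by rw [← Multiset.count_pos, hcount]; norm_num
  set B := C.erase (c.1 : Q) with hBdef
  have hCB : {(c.1 : Q)} + B = C := by
    rw [Multiset.singleton_add]; exact Multiset.cons_erase hmem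
  have hBL : ∀ q : Q, P.isLeader q = true → B.count q = 0 := by
    intro q hq
    by_cases hql : q = (c.1 : Q)
    · subst hql; rw [hBdef, Multiset.count_erase_self, hcount]
    · rw [hBdef, Multiset.count_erase_of_ne hql, hCL q hq, if_neg hql]
  have hBP : ∀ q : Q, q ≠ (c.1 : Q) → B.count q = C.count q := by
    intro q hq; rw [hBdef, Multiset.count_erase_of_ne hq]
  rcases h with ⟨a, q1, q2, hL, hP, hγ⟩ | ⟨hLeq, a, q1, q2, q3, q4, h12, h34, hγ⟩
  · -- case 1: leader edge together with one process edge
    refine ⟨{(c'.1 : Q)} + B + {(q1 : Q), (q2 : Q)} + Multiset.replicate 2 P.qi,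
      ⟨?_, ?_⟩, ?_, ?_⟩
    · intro q hq
      have h1 : q ≠ (q1 : Q) := P.proc_ne_leader hq q1
      have h2 : q ≠ (q2 : Q) := P.proc_ne_leader hq q2
      have h3 : q ≠ P.qi := P.proc_ne_leader hq ⟨P.qi, P.hqi⟩
      simp [Multiset.count_replicate, Multiset.insert_eq_cons, Multiset.count_cons,
        Multiset.count_singleton, h1, h2, h3, hBL q hq]
    · intro x
      have hx1 : (x : Q) ≠ (c.1 : Q) := (P.proc_ne_leader c.1.2 x).symm
      have hx2 : (x : Q) ≠ (c'.1 : Q) := (P.proc_ne_leader c'.1.2 x).symm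
      have e1 : ((x : Q) = (q1 : Q)) = (x = q1) := by simp [Subtype.ext_iff]
      have e2 : ((x : Q) = (q2 : Q)) = (x = q2) := by simp [Subtype.ext_iff]
      have hm : ({(c'.1 : Q)} + B + {(q1 : Q), (q2 : Q)}
            + Multiset.replicate 2 P.qi).count (x : Q) % 2
          = (C.count (x : Q) + (if x = q1 then 1 else 0) + (if x = q2 then 1 else 0)) % 2 := by
        simp only [Multiset.count_add, Multiset.insert_eq_cons, Multiset.count_cons,
          Multiset.count_singleton, Multiset.count_replicate, e1, e2, hBP (x : Q) hx1,
          if_neg hx2]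
        split_ifs <;> omega
      rw [hγ]
      exact flip_aux hm (hCγ x)
    · have hc := congrArg Multiset.card hCB
      simp only [Multiset.card_add, Multiset.card_singleton, Multiset.insert_eq_cons,
        Multiset.card_cons, Multiset.card_replicate] at hc ⊢
      omega
    · intro X
      have move1 := P.pairReach hsym (hconn (q1 : Q) q1.2).1
        ({(c.1 : Q)} + B + Multiset.replicate 2 P.qi + X)
      have st := P.step_core hL ((hsym _ a _).mp hP)
        (B + Multiset.replicate 2 P.qi + X + {(q1 : Q)})
      have E1 : C + Multiset.replicate 4 P.qi + X
          = ({(c.1 : Q)} + B + Multiset.replicate 2 P.qi + X) + {P.qi, P.qi} := by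
        rw [← hCB]; ext y
        simp only [Multiset.count_add, Multiset.insert_eq_cons, Multiset.count_cons,
          Multiset.count_singleton, Multiset.count_replicate, eq_comm]
        split_ifs <;> omega
      have E2 : ({(c.1 : Q)} + B + Multiset.replicate 2 P.qi + X) + {(q1 : Q), (q1 : Q)}
          = (B + Multiset.replicate 2 P.qi + X + {(q1 : Q)}) + {(q1 : Q), (c.1 : Q)} := by
        ext y
        simp only [Multiset.count_add, Multiset.insert_eq_cons, Multiset.count_cons,
          Multiset.count_singleton, Multiset.count_replicate]
        split_ifs <;> omega
      have E3 : (B + Multiset.replicate 2 P.qi + X + {(q1 : Q)}) + {(q2 : Q), (c'.1 : Q)}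
          = ({(c'.1 : Q)} + B + {(q1 : Q), (q2 : Q)} + Multiset.replicate 2 P.qi) + X := by
        ext y
        simp only [Multiset.count_add, Multiset.insert_eq_cons, Multiset.count_cons,
          Multiset.count_singleton, Multiset.count_replicate]
        split_ifs <;> omega
      rw [E1]
      refine Relation.ReflTransGen.trans move1 ?_
      rw [E2]
      have st' := Relation.ReflTransGen.single st
      rw [E3] at st'
      exact st'
  · -- case 2: two process edges with the same letter
    refine ⟨C + {(q1 : Q), (q2 : Q)} + {(q3 : Q), (q4 : Q)}, ⟨?_, ?_⟩, ?_, ?_⟩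
    · intro q hq
      have h1 : q ≠ (q1 : Q) := P.proc_ne_leader hq q1
      have h2 : q ≠ (q2 : Q) := P.proc_ne_leader hq q2
      have h3 : q ≠ (q3 : Q) := P.proc_ne_leader hq q3
      have h4 : q ≠ (q4 : Q) := P.proc_ne_leader hq q4
      rw [← hLeq]
      simp [Multiset.insert_eq_cons, Multiset.count_cons, Multiset.count_singleton,
        h1, h2, h3, h4, hCL q hq]
    · intro x
      have e1 : ((x : Q) = (q1 : Q)) = (x = q1) := by simp [Subtype.ext_iff]
      have e2 : ((x : Q) = (q2 : Q)) = (x = q2) := by simp [Subtype.ext_iff]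
      have e3 : ((x : Q) = (q3 : Q)) = (x = q3) := by simp [Subtype.ext_iff]
      have e4 : ((x : Q) = (q4 : Q)) = (x = q4) := by simp [Subtype.ext_iff]
      have hmid : Even (C.count (x : Q) + (if x = q1 then 1 else 0)
            + (if x = q2 then 1 else 0)) ↔ flipTwo c.2 q1 q2 x = false :=
        flip_aux rfl (hCγ x)
      have hm : (C + {(q1 : Q), (q2 : Q)} + {(q3 : Q), (q4 : Q)}).count (x : Q) % 2
          = ((C.count (x : Q) + (if x = q1 then 1 else 0) + (if x = q2 then 1 else 0))
              + (if x = q3 then 1 else 0) + (if x = q4 then 1 else 0)) % 2 := by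
        simp only [Multiset.count_add, Multiset.insert_eq_cons, Multiset.count_cons,
          Multiset.count_singleton, e1, e2, e3, e4]
        split_ifs <;> omega
      rw [hγ]
      exact flip_aux hm hmid
    · simp [Multiset.insert_eq_cons]
    · intro X
      have move1 := P.pairReach hsym (hconn (q1 : Q) q1.2).1 (C + {P.qi, P.qi} + X)
      have move2 := P.pairReach hsym (hconn (q3 : Q) q3.2).1 (C + {(q1 : Q), (q1 : Q)} + X)
      have st := P.step_core h12 ((hsym _ a _).mp h34)
        (C + {(q1 : Q)} + {(q3 : Q)} + X)
      have E1 : C + Multiset.replicate 4 P.qi + X = (C + {P.qi, P.qi} + X) + {P.qi, P.qi} := by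
        ext y
        simp only [Multiset.count_add, Multiset.insert_eq_cons, Multiset.count_cons,
          Multiset.count_singleton, Multiset.count_replicate, eq_comm]
        split_ifs <;> omega
      have E2 : (C + {P.qi, P.qi} + X) + {(q1 : Q), (q1 : Q)}
          = (C + {(q1 : Q), (q1 : Q)} + X) + {P.qi, P.qi} := by
        ext y
        simp only [Multiset.count_add, Multiset.insert_eq_cons, Multiset.count_cons,
          Multiset.count_singleton]
        split_ifs <;> omega
      have E3 : (C + {(q1 : Q), (q1 : Q)} + X) + {(q3 : Q), (q3 : Q)}
          = (C + {(q1 : Q)} + {(q3 : Q)} + X) + {(q3 : Q), (q1 : Q)} := by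
        ext y
        simp only [Multiset.count_add, Multiset.insert_eq_cons, Multiset.count_cons,
          Multiset.count_singleton]
        split_ifs <;> omega
      have E4 : (C + {(q1 : Q)} + {(q3 : Q)} + X) + {(q4 : Q), (q2 : Q)}
          = (C + {(q1 : Q), (q2 : Q)} + {(q3 : Q), (q4 : Q)}) + X := by
        ext y
        simp only [Multiset.count_add, Multiset.insert_eq_cons, Multiset.count_cons,
          Multiset.count_singleton]
        split_ifs <;> omega
      rw [E1]
      refine Relation.ReflTransGen.trans move1 ?_
      rw [E2]
      refine Relation.ReflTransGen.trans move2 ?_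
      rw [E3]
      have st' := Relation.ReflTransGen.single st
      rw [E4] at st'
      exact st'

end RVProtocol

namespace RVProtocol

variable {Q A : Type} [DecidableEq Q] (P : RVProtocol Q A)

lemma simStar (hsym : P.IsSymmetric) (hconn : P.Connected) {c c' : P.AbsConf}
    (h : P.EOReach c c') : ∃ m : ℕ, ∀ C, P.Rep c C →
      ∃ C', P.Rep c' C' ∧ C'.card = C.card + 4 * m ∧
        ∀ X, P.Reach (C + Multiset.replicate (4 * m) P.qi + X) (C' + X) := by
  induction h with
  | refl =>
      exact ⟨0, fun C hC => ⟨C, hC, by simp, fun X => by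
        simpa [Reach] using (Relation.ReflTransGen.refl : P.Reach (C + X) (C + X))⟩⟩
  | tail hab hbc ih =>
      obtain ⟨m, hm⟩ := ih
      refine ⟨m + 1, fun C hC => ?_⟩
      obtain ⟨C1, hC1, hcard1, hR1⟩ := hm C hC
      obtain ⟨C2, hC2, hcard2, hR2⟩ := P.sim hsym hconn hbc C1 hC1
      refine ⟨C2, hC2, by omega, fun X => ?_⟩
      have e : C + Multiset.replicate (4 * (m + 1)) P.qi + X
          = C + Multiset.replicate (4 * m) P.qi + (Multiset.replicate 4 P.qi + X) := by
        rw [show 4 * (m + 1) = 4 * m + 4 by ring, Multiset.replicate_add]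
        abel
      rw [e]
      refine Relation.ReflTransGen.trans (hR1 _) ?_
      have := hR2 X
      rwa [add_assoc] at this

lemma phase2 (hsym : P.IsSymmetric) (hconn : P.Connected) :
    ∀ n (C : Multiset Q),
    (C.filter (fun q => q ≠ P.qf ∧ P.isLeader q = false)).card = n →
    (∀ q, P.isLeader q = true → C.count q = if q = P.qfL then 1 else 0) →
    (∀ q, P.isLeader q = false → q ≠ P.qf → Even (C.count q)) →
    P.Reach C (P.Cf (C.card - 1)) := by
  intro n
  induction n using Nat.strong_induction_on with
  | _ n ih =>
    intro C hn hL hE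
    by_cases hex : ∃ q, P.isLeader q = false ∧ q ≠ P.qf ∧ 0 < C.count q
    · obtain ⟨q, hql, hqf, hqc⟩ := hex
      have h2 : 2 ≤ C.count q := by
        obtain ⟨k, hk⟩ := hE q hql hqf; omega
      have hle : ({q, q} : Multiset Q) ≤ C := by
        rw [Multiset.le_iff_count]
        intro x
        by_cases hx : x = q <;>
          simp [Multiset.insert_eq_cons, Multiset.count_cons, Multiset.count_singleton, hx] <;>
          omega
      have hC : C - {q, q} + {q, q} = C := tsub_add_cancel_of_le hle
      set D := C - {q, q} with hD
      have hreach : P.Reach C (D + {P.qf, P.qf}) := by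
        conv_lhs => rw [← hC]
        exact P.pairReach hsym (hconn q hql).2 D
      set C2 := D + {P.qf, P.qf} with hC2
      have hcnt : ∀ x, C2.count x = C.count x - (if x = q then 2 else 0)
          + (if x = P.qf then 2 else 0) := by
        intro x
        rw [hC2, hD]
        simp only [Multiset.count_add, Multiset.count_sub, Multiset.insert_eq_cons,
          Multiset.count_cons, Multiset.count_singleton, eq_comm]
        split_ifs <;> omega
      have hcard2 : C2.card = C.card := by
        have h1 := congrArg Multiset.card hC
        rw [hC2]
        simp only [Multiset.card_add, Multiset.insert_eq_cons, Multiset.card_cons,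
          Multiset.card_singleton] at h1 ⊢
        omega
      have hmeas : (C2.filter (fun q => q ≠ P.qf ∧ P.isLeader q = false)).card = n - 2 ∧ 2 ≤ n := by
        have hfC : C.filter (fun x => x ≠ P.qf ∧ P.isLeader x = false)
            = D.filter (fun x => x ≠ P.qf ∧ P.isLeader x = false) + {q, q} := by
          conv_lhs => rw [← hC]
          rw [Multiset.filter_add]
          congr 1
          rw [Multiset.filter_eq_self]
          intro a ha
          rw [Multiset.insert_eq_cons] at ha
          rcases Multiset.mem_cons.mp ha with h | h
          · subst h; exact ⟨hqf, hql⟩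
          · rw [Multiset.mem_singleton.mp h]; exact ⟨hqf, hql⟩
        have hfC2 : C2.filter (fun x => x ≠ P.qf ∧ P.isLeader x = false)
            = D.filter (fun x => x ≠ P.qf ∧ P.isLeader x = false) := by
          rw [hC2, Multiset.filter_add]
          have : ({P.qf, P.qf} : Multiset Q).filter
              (fun x => x ≠ P.qf ∧ P.isLeader x = false) = 0 := by
            rw [Multiset.filter_eq_nil]
            intro a ha hcontra
            rw [Multiset.insert_eq_cons] at ha
            rcases Multiset.mem_cons.mp ha with h | h
            · exact hcontra.1 h
            · exact hcontra.1 (Multiset.mem_singleton.mp h)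
          rw [this, add_zero]
        rw [hfC] at hn
        simp only [Multiset.card_add, Multiset.insert_eq_cons, Multiset.card_cons,
          Multiset.card_singleton] at hn
        rw [hfC2]
        omega
      have hrec := ih (n - 2) (by omega) C2 hmeas.1
        (by
          intro x hx
          have h1 : x ≠ q := fun e => by rw [e, hql] at hx; exact absurd hx (by simp)
          have h2 : x ≠ P.qf := fun e => by rw [e, P.hqf] at hx; exact absurd hx (by simp)
          rw [hcnt x, if_neg h1, if_neg h2, hL x hx]; simp)
        (by
          intro x hx hxf
          rw [hcnt x, if_neg hxf]
          by_cases h1 : x = q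
          · subst h1
            obtain ⟨k, hk⟩ := hE x hx hxf
            rw [if_pos rfl]
            exact ⟨k - 1, by omega⟩
          · rw [if_neg h1]
            simpa using hE x hx hxf)
      rw [hcard2] at hrec
      exact Relation.ReflTransGen.trans hreach hrec
    · push_neg at hex
      have hqfqfL : P.qf ≠ P.qfL := fun e => by
        have := P.hqf; rw [e, P.hqfL] at this; exact absurd this (by simp)
      have hCeq : C = P.Cf (C.count P.qf) := by
        ext x
        by_cases h1 : x = P.qf
        · subst h1
          simp [Cf, Multiset.count_replicate, Multiset.count_singleton, hqfqfL,
            Ne.symm hqfqfL]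
        · by_cases h2 : x = P.qfL
          · subst h2
            have hcl := hL _ P.hqfL
            simp only [if_pos rfl] at hcl
            simp [Cf, Multiset.count_replicate, Multiset.count_singleton, h1,
              Ne.symm h1, hcl]
          · cases hx : P.isLeader x with
            | true =>
                have hcl := hL x hx
                rw [if_neg h2] at hcl
                simp [Cf, Multiset.count_replicate, Multiset.count_singleton, h1,
                  Ne.symm h1, h2, Ne.symm h2, hcl]
            | false =>
                have h0 : C.count x = 0 := Nat.le_zero.mp (hex x hx h1)
                simp [Cf, Multiset.count_replicate, Multiset.count_singleton, h1,
                  Ne.symm h1, h2, Ne.symm h2, h0]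
      have hcard : C.card = C.count P.qf + 1 := by
        conv_lhs => rw [hCeq]
        simp [Cf]
      rw [hcard]
      simp only [Nat.add_sub_cancel]
      conv_lhs => rw [hCeq]
      exact Relation.ReflTransGen.refl

end RVProtocol


/-- **Soundness of the even-odd abstraction.** In a symmetric rendez-vous
protocol whose every process state lies on a path from `q_i` to `q_f`: if
`(q_i^L,γ_i^E) ⇝* (q_f^L,γ_f^E)` then `C_i^{(n)} →* C_f^{(n)}` for some even `n`; and if
`(q_i^L,γ_i^O) ⇝* (q_f^L,γ_f^O)` then `C_i^{(n)} →* C_f^{(n)}` for some odd `n`. -/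
theorem eo_abstraction_sound {Q A : Type} [Fintype Q] [Fintype A] [DecidableEq Q]
    (P : RVProtocol Q A) (hsym : P.IsSymmetric) (hconn : P.Connected) :
    (P.EOReach P.absIE P.absFE →
      ∃ n : ℕ, Even n ∧ P.Reach (P.Ci n) (P.Cf n)) ∧
    (P.EOReach P.absIO P.absFO →
      ∃ n : ℕ, Odd n ∧ P.Reach (P.Ci n) (P.Cf n)) := by
  have hqiqiL : P.qi ≠ P.qiL := fun e => by
    have := P.hqi; rw [e, P.hqiL] at this; exact absurd this (by simp)
  constructor
  · intro h
    obtain ⟨m, hm⟩ := P.simStar hsym hconn h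
    have hrep : P.Rep P.absIE ({P.qiL} : Multiset Q) := by
      constructor
      · intro q hq
        simp [RVProtocol.absIE, Multiset.count_singleton]
        exact if_congr Iff.rfl rfl rfl
      · intro x
        have hxne : (x : Q) ≠ P.qiL := fun e => by
          have := x.2; rw [e, P.hqiL] at this; exact absurd this (by simp)
        have h0 : ({P.qiL} : Multiset Q).count (x : Q) = 0 := by
          simp [Multiset.count_singleton, hxne]
        simp [RVProtocol.absIE, h0]
    obtain ⟨C', hC', hcard, hR⟩ := hm _ hrep
    refine ⟨4 * m, ⟨2 * m, by ring⟩, ?_⟩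
    have hCi : P.Ci (4 * m) = {P.qiL} + Multiset.replicate (4 * m) P.qi + 0 := by
      rw [RVProtocol.Ci, add_zero, add_comm]
    have hreach1 : P.Reach (P.Ci (4 * m)) C' := by
      rw [hCi]
      simpa using hR 0
    have hL' : ∀ q, P.isLeader q = true → C'.count q = if q = P.qfL then 1 else 0 := by
      intro q hq; exact hC'.1 q hq
    have hE' : ∀ q, P.isLeader q = false → q ≠ P.qf → Even (C'.count q) := by
      intro q hq _
      simpa [RVProtocol.absFE] using (hC'.2 ⟨q, hq⟩).2 rfl
    have h2 := P.phase2 hsym hconn _ C' rfl hL' hE'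
    have hc : C'.card - 1 = 4 * m := by simp at hcard; omega
    rw [hc] at h2
    exact hreach1.trans h2
  · intro h
    obtain ⟨m, hm⟩ := P.simStar hsym hconn h
    have hrep : P.Rep P.absIO ({P.qi, P.qiL} : Multiset Q) := by
      constructor
      · intro q hq
        have hq1 : q ≠ P.qi := fun e => by
          rw [e, P.hqi] at hq; exact absurd hq (by simp)
        simp [RVProtocol.absIO, Multiset.insert_eq_cons, Multiset.count_cons,
          Multiset.count_singleton, hq1]
        exact if_congr Iff.rfl rfl rfl
      · intro x
        have hxne : (x : Q) ≠ P.qiL := fun e => by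
          have := x.2; rw [e, P.hqiL] at this; exact absurd this (by simp)
        by_cases hx : (x : Q) = P.qi <;>
          simp [RVProtocol.absIO, Multiset.insert_eq_cons, Multiset.count_cons,
            Multiset.count_singleton, hx, hxne, hqiqiL, Nat.even_add_one]
    obtain ⟨C', hC', hcard, hR⟩ := hm _ hrep
    refine ⟨4 * m + 1, ⟨2 * m, by ring⟩, ?_⟩
    have hCi : P.Ci (4 * m + 1) = {P.qi, P.qiL} + Multiset.replicate (4 * m) P.qi + 0 := by
      rw [RVProtocol.Ci, add_zero]
      ext y
      simp only [Multiset.count_add, Multiset.count_replicate, Multiset.insert_eq_cons,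
        Multiset.count_cons, Multiset.count_singleton, eq_comm]
      split_ifs <;> omega
    have hreach1 : P.Reach (P.Ci (4 * m + 1)) C' := by
      rw [hCi]
      simpa using hR 0
    have hL' : ∀ q, P.isLeader q = true → C'.count q = if q = P.qfL then 1 else 0 := by
      intro q hq; exact hC'.1 q hq
    have hE' : ∀ q, P.isLeader q = false → q ≠ P.qf → Even (C'.count q) := by
      intro q hq hqf
      have := (hC'.2 ⟨q, hq⟩).2
      simp only [RVProtocol.absFO] at this
      exact this (by simpa using hqf)
    have h2 := P.phase2 hsym hconn _ C' rfl hL' hE'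
    have hc : C'.card - 1 = 4 * m + 1 := by
      simp [Multiset.insert_eq_cons] at hcard; omega
    rw [hc] at h2
    exact hreach1.trans h2
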